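/- Consider the random graph process (G_m)_{m=0}^{N} on vertex set [n], N = C(n,2). Then with high probability, simultaneously for every integer m with (n/2)(log n − log log n) ≤ m ≤ (n/2)(log n + log log n) and every set S ⊆ [n] with |S| ≤ n / (log n)^3, the number of edges of G_m inside S satisfies e_m(S) ≤ 2|S|. -/

import Mathlib

/-- The edges of the complete graph `K_n` on vertex set `Fin n`. -/
abbrev EdgeKn (n : ℕ) := {e : Sym2 (Fin n) // ¬ e.IsDiag}

/-- An ordering of the edges of `K_n`: a bijection from `Fin (n.choose 2)` to the
edge set of `K_n`.  A uniformly random such bijection models the random graph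
process `G_0 ⊂ G_1 ⊂ ⋯ ⊂ G_N` on `[n]`. -/
abbrev EOrd (n : ℕ) := Fin (n.choose 2) ≃ EdgeKn n

open scoped Classical in
/-- Probability of an event under the uniform distribution on a finite sample space. -/
noncomputable def prob {Ω : Type*} [Fintype Ω] (p : Ω → Prop) : ℝ :=
  (Finset.univ.filter fun ω => p ω).card / Fintype.card Ω

/-- The graph `G_m` of the process: the graph on `Fin n` formed by the first `m`
edges of the ordering `ω`. -/
def graphUpTo {n : ℕ} (ω : EOrd n) (m : ℕ) : SimpleGraph (Fin n) :=
  SimpleGraph.fromEdgeSet {e | ∃ i : Fin (n.choose 2), (i : ℕ) < m ∧ (ω i).1 = e}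

/-- `e_m(S)`: the number of edges of `G_m` with both endpoints in `S`. -/
noncomputable def eIn {n : ℕ} (ω : EOrd n) (m : ℕ) (S : Finset (Fin n)) : ℕ :=
  Set.ncard {i : Fin (n.choose 2) | (i : ℕ) < m ∧ ∀ v ∈ (ω i).1, v ∈ S}

/-- `m` lies in the interval `[(n/2)(log n − log log n), (n/2)(log n + log log n)]`. -/
def mInRange (n m : ℕ) : Prop :=
  (n : ℝ) / 2 * (Real.log n - Real.log (Real.log n)) ≤ m ∧
    (m : ℝ) ≤ (n : ℝ) / 2 * (Real.log n + Real.log (Real.log n))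

set_option maxHeartbeats 4000000
section Aux
open Finset

section ProbLemmas
variable {Ω : Type*} [Fintype Ω]

lemma prob_eq_card (p : Ω → Prop) [DecidablePred p] :
    prob p = ((Finset.univ.filter fun ω => p ω).card : ℝ) / Fintype.card Ω := by
  unfold prob
  rw [Finset.filter_congr_decidable]

lemma prob_nonneg (p : Ω → Prop) : 0 ≤ prob p := by
  classical
  rw [prob_eq_card]; positivity

lemma prob_le_one (p : Ω → Prop) : prob p ≤ 1 := by
  classical
  rw [prob_eq_card]
  rcases Nat.eq_zero_or_pos (Fintype.card Ω) with h | h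
  · simp [h]
  · rw [div_le_one (by exact_mod_cast h)]
    exact_mod_cast (Finset.card_filter_le _ _).trans (le_of_eq Finset.card_univ)

lemma prob_mono {p q : Ω → Prop} (h : ∀ ω, p ω → q ω) : prob p ≤ prob q := by
  classical
  rw [prob_eq_card, prob_eq_card]
  rcases Nat.eq_zero_or_pos (Fintype.card Ω) with hc | hc
  · simp [hc]
  · rw [div_le_div_iff_of_pos_right (by exact_mod_cast hc)]
    exact_mod_cast Finset.card_le_card (Finset.monotone_filter_right _ (fun a _ => h a))

lemma prob_exists_le {ι : Type*} (t : Finset ι) (p : ι → Ω → Prop) :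
    prob (fun ω => ∃ x ∈ t, p x ω) ≤ ∑ x ∈ t, prob (fun ω => p x ω) := by
  classical
  simp only [prob_eq_card]
  rw [← Finset.sum_div]
  rcases Nat.eq_zero_or_pos (Fintype.card Ω) with hc | hc
  · simp [hc]
  · rw [div_le_div_iff_of_pos_right (by exact_mod_cast hc)]
    have hsub : (Finset.univ.filter fun ω => ∃ x ∈ t, p x ω)
        ⊆ t.biUnion (fun x => Finset.univ.filter fun ω => p x ω) := by
      intro ω hω
      simp only [Finset.mem_filter, Finset.mem_biUnion, Finset.mem_univ, true_and] at hω ⊢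
      tauto
    exact_mod_cast (Finset.card_le_card hsub).trans Finset.card_biUnion_le

lemma prob_compl (h : Fintype.card Ω ≠ 0) (p : Ω → Prop) :
    prob p = 1 - prob (fun ω => ¬ p ω) := by
  classical
  rw [prob_eq_card, prob_eq_card]
  have hh := Finset.card_filter_add_card_filter_not (s := (Finset.univ : Finset Ω)) p
  rw [eq_sub_iff_add_eq, ← add_div, div_eq_one_iff_eq (by exact_mod_cast h), ← Finset.card_univ]
  exact_mod_cast hh

end ProbLemmas
set_option maxHeartbeats 4000000

open Finset

section Counting
variable {γ δ : Type*} [Fintype γ] [Fintype δ] [DecidableEq γ] [DecidableEq δ]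

lemma card_filter_inj_le (P : δ → Prop) [DecidablePred P] :
    ((Finset.univ : Finset (γ → δ)).filter
        (fun h => Function.Injective h ∧ ∀ x, P (h x))).card
      ≤ (Fintype.card {y // P y}).descFactorial (Fintype.card γ) := by
  rw [← Fintype.card_embedding_eq (α := γ) (β := {y // P y}), ← Fintype.card_subtype]
  apply Fintype.card_le_of_injective
    (fun h => (⟨fun x => (⟨h.1 x, h.2.2 x⟩ : {y // P y}),
      fun a b hab => h.2.1 (congrArg Subtype.val hab)⟩ : γ ↪ {y // P y}))
  intro h1 h2 he
  apply Subtype.ext; funext x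
  exact congrArg Subtype.val (congrFun (congrArg (fun (e : γ ↪ {y // P y}) => (e : γ → {y // P y})) he) x)

lemma card_equiv_filter_le {α β : Type*} [Fintype α] [Fintype β] [DecidableEq α] [DecidableEq β]
    (hcard : Fintype.card α = Fintype.card β) (A : Finset α) (B : Finset β) :
    ((Finset.univ : Finset (α ≃ β)).filter (fun σ => ∀ a ∈ A, σ a ∈ B)).card
      ≤ B.card.descFactorial A.card * Nat.factorial (Fintype.card α - A.card) := by
  classical
  set t : Finset ({x // x ∈ A} → β) :=
    Finset.univ.filter (fun g => Function.Injective g ∧ ∀ a, g a ∈ B) with ht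
  have hmap : ∀ σ ∈ (Finset.univ : Finset (α ≃ β)).filter (fun σ => ∀ a ∈ A, σ a ∈ B),
      (fun a : {x // x ∈ A} => σ a.1) ∈ t := by
    intro σ hσ
    simp only [ht, Finset.mem_filter, Finset.mem_univ, true_and] at hσ ⊢
    exact ⟨fun a b hab => Subtype.ext (σ.injective hab), fun a => hσ a.1 a.2⟩
  rw [Finset.card_eq_sum_card_fiberwise hmap]
  have hfiber : ∀ g ∈ t,
      (((Finset.univ : Finset (α ≃ β)).filter (fun σ => ∀ a ∈ A, σ a ∈ B)).filter
        (fun σ => (fun a : {x // x ∈ A} => σ a.1) = g)).card ≤ Nat.factorial (Fintype.card α - A.card) := by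
    intro g hg
    simp only [ht, Finset.mem_filter, Finset.mem_univ, true_and] at hg
    obtain ⟨hginj, hgB⟩ := hg
    set img : Finset β := Finset.univ.image g with himg
    have himgcard : img.card = A.card := by
      rw [himg, Finset.card_image_of_injective _ hginj, Finset.card_univ, Fintype.card_coe]
    have step1 : (((Finset.univ : Finset (α ≃ β)).filter (fun σ => ∀ a ∈ A, σ a ∈ B)).filter
          (fun σ => (fun a : {x // x ∈ A} => σ a.1) = g)).card
        ≤ ((Finset.univ : Finset ({x // x ∉ A} → β)).filter
            (fun h => Function.Injective h ∧ ∀ x, h x ∉ img)).card := by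
      apply Finset.card_le_card_of_injOn (fun σ : α ≃ β => fun x : {x // x ∉ A} => σ x.1)
      · intro σ hσ
        simp only [Finset.mem_coe, Finset.mem_filter, Finset.mem_univ, true_and] at hσ ⊢
        obtain ⟨hσB, hres⟩ := hσ
        refine ⟨fun a b hab => Subtype.ext (σ.injective hab), fun x hx => ?_⟩
        obtain ⟨a, -, ha⟩ := Finset.mem_image.1 hx
        have h1 : σ a.1 = σ x.1 := by
          have h5 := congrFun hres a
          exact h5.trans ha
        exact x.2 (by rw [← σ.injective h1]; exact a.2)
      · intro σ1 h1 σ2 h2 hres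
        simp only [Finset.mem_coe, Finset.mem_filter] at h1 h2
        apply Equiv.ext
        intro x
        by_cases hx : x ∈ A
        · exact congrFun (h1.2.trans h2.2.symm) ⟨x, hx⟩
        · exact congrFun hres ⟨x, hx⟩
    refine step1.trans ?_
    refine (card_filter_inj_le (γ := {x // x ∉ A}) (δ := β) (fun y => y ∉ img)).trans (le_of_eq ?_)
    have h1 : Fintype.card {y // y ∉ img} = Fintype.card β - A.card := by
      rw [Fintype.card_subtype_compl, Fintype.card_coe, himgcard]
    have h2 : Fintype.card {x // x ∉ A} = Fintype.card α - A.card := by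
      rw [Fintype.card_subtype_compl, Fintype.card_coe]
    rw [h1, h2, ← hcard, Nat.descFactorial_self]
  calc ∑ g ∈ t, (((Finset.univ : Finset (α ≃ β)).filter (fun σ => ∀ a ∈ A, σ a ∈ B)).filter
        (fun σ => (fun a : {x // x ∈ A} => σ a.1) = g)).card
      ≤ t.card * Nat.factorial (Fintype.card α - A.card) := by
        rw [← smul_eq_mul]
        exact Finset.sum_le_card_nsmul _ _ _ hfiber
    _ ≤ B.card.descFactorial A.card * Nat.factorial (Fintype.card α - A.card) := by
        apply Nat.mul_le_mul_right
        have h3 := card_filter_inj_le (γ := {x // x ∈ A}) (δ := β) (P := fun y => y ∈ B)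
        simp only [Fintype.card_coe] at h3
        exact h3
  end Counting

open Finset

lemma card_EdgeKn (n : ℕ) : Fintype.card (EdgeKn n) = n.choose 2 := by
  simpa using Sym2.card_subtype_not_diag (α := Fin n)

lemma card_EOrd (n : ℕ) : Fintype.card (EOrd n) = Nat.factorial (n.choose 2) := by
  rw [Fintype.card_equiv (Fintype.equivOfCardEq (by rw [card_EdgeKn, Fintype.card_fin]) :
    Fin (n.choose 2) ≃ EdgeKn n), Fintype.card_fin]

lemma nat_df_ratio {M N : ℕ} (h : M ≤ N) : ∀ k : ℕ,
    M.descFactorial k * N ^ k ≤ M ^ k * N.descFactorial k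
  | 0 => by simp
  | k + 1 => by
    rw [Nat.descFactorial_succ, Nat.descFactorial_succ, pow_succ, pow_succ]
    have h1 : (M - k) * N ≤ M * (N - k) := by
      rcases Nat.le_total k M with hk | hk
      · have h3 : M * k ≤ k * N := by
          rw [mul_comm]
          exact Nat.mul_le_mul_left k h
        rw [Nat.sub_mul, Nat.mul_sub]
        omega
      · rw [Nat.sub_eq_zero_of_le hk]
        simp
    calc (M - k) * M.descFactorial k * (N ^ k * N)
        = ((M - k) * N) * (M.descFactorial k * N ^ k) := by ring
      _ ≤ (M * (N - k)) * (M ^ k * N.descFactorial k) :=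
          Nat.mul_le_mul h1 (nat_df_ratio h k)
      _ = M ^ k * M * ((N - k) * N.descFactorial k) := by ring

lemma eIn_eq_card {n : ℕ} (ω : EOrd n) (m : ℕ) (S : Finset (Fin n)) :
    eIn ω m S = (Finset.univ.filter
      (fun e : EdgeKn n => (∀ v ∈ e.1, v ∈ S) ∧ ((ω.symm e : Fin (n.choose 2)) : ℕ) < m)).card := by
  classical
  rw [eIn]
  have hset : {i : Fin (n.choose 2) | (i : ℕ) < m ∧ ∀ v ∈ (ω i).1, v ∈ S}
      = ↑(Finset.univ.filter (fun i : Fin (n.choose 2) => (i : ℕ) < m ∧ ∀ v ∈ (ω i).1, v ∈ S)) := by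
    ext i; simp
  rw [hset, Set.ncard_coe_finset]
  apply Finset.card_bij (fun i _ => ω i)
  · intro i hi
    simp only [Finset.mem_filter, Finset.mem_univ, true_and] at hi ⊢
    exact ⟨hi.2, by simpa using hi.1⟩
  · intro a _ b _ hab
    exact ω.injective hab
  · intro e he
    simp only [Finset.mem_filter, Finset.mem_univ, true_and] at he
    refine ⟨ω.symm e, Finset.mem_filter.mpr ⟨Finset.mem_univ _, ?_⟩, by simp⟩
    simp only [Equiv.apply_symm_apply]
    exact ⟨he.2, he.1⟩

lemma prob_T {n : ℕ} (M : ℕ) (hMN : M ≤ n.choose 2) (hN : 0 < n.choose 2)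
    (T : Finset (EdgeKn n)) (hT : T.card ≤ n.choose 2) :
    prob (fun ω : EOrd n => ∀ e ∈ T, ((ω.symm e : Fin (n.choose 2)) : ℕ) < M)
      ≤ ((M : ℝ) / (n.choose 2)) ^ T.card := by
  classical
  rw [prob_eq_card, card_EOrd]
  set N := n.choose 2 with hNdef
  set k := T.card with hkdef
  set B : Finset (Fin N) := Finset.univ.filter (fun i => (i : ℕ) < M) with hB
  have hcount : (Finset.univ.filter (fun ω : EOrd n =>
      ∀ e ∈ T, ((ω.symm e : Fin N) : ℕ) < M)).card
      ≤ B.card.descFactorial k * Nat.factorial (N - k) := by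
    have hinj : (Finset.univ.filter (fun ω : EOrd n =>
        ∀ e ∈ T, ((ω.symm e : Fin N) : ℕ) < M)).card
        ≤ ((Finset.univ : Finset (EdgeKn n ≃ Fin N)).filter
            (fun σ => ∀ e ∈ T, σ e ∈ B)).card := by
      apply Finset.card_le_card_of_injOn (fun ω => ω.symm)
      · intro ω hω
        simp only [Finset.mem_coe, Finset.mem_filter, Finset.mem_univ, true_and] at hω ⊢
        intro e he
        rw [hB]
        exact Finset.mem_filter.mpr ⟨Finset.mem_univ _, hω e he⟩
      · intro a _ b _ hab
        simpa using congrArg Equiv.symm hab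
    refine hinj.trans ?_
    have h5 := card_equiv_filter_le (α := EdgeKn n) (β := Fin N)
      (by rw [card_EdgeKn, Fintype.card_fin]) T B
    rwa [card_EdgeKn] at h5
  have hBcard : B.card ≤ M := by
    have hsub : B.image Fin.val ⊆ Finset.range M := by
      intro x hx
      obtain ⟨i, hi, rfl⟩ := Finset.mem_image.mp hx
      rw [hB] at hi
      simp only [Finset.mem_filter] at hi
      exact Finset.mem_range.mpr hi.2
    calc B.card = (B.image Fin.val).card :=
          (Finset.card_image_of_injective _ Fin.val_injective).symm
      _ ≤ (Finset.range M).card := Finset.card_le_card hsub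
      _ = M := Finset.card_range M
  have hc2 : (Finset.univ.filter (fun ω : EOrd n =>
      ∀ e ∈ T, ((ω.symm e : Fin N) : ℕ) < M)).card
      ≤ M.descFactorial k * Nat.factorial (N - k) :=
    hcount.trans (Nat.mul_le_mul_right _ (Nat.descFactorial_le _ hBcard))
  have hkN : k ≤ N := hT
  have hNfpos : (0:ℝ) < (Nat.factorial N : ℝ) := by exact_mod_cast Nat.factorial_pos N
  have hdfpos : (0:ℝ) < (N.descFactorial k : ℝ) := by
    have h6 : N.descFactorial k ≠ 0 := by
      intro h0
      rw [Nat.descFactorial_eq_zero_iff_lt] at h0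
      omega
    exact_mod_cast Nat.pos_of_ne_zero h6
  have hNpos : (0:ℝ) < (N : ℝ) := by exact_mod_cast hN
  calc ((Finset.univ.filter (fun ω : EOrd n =>
          ∀ e ∈ T, ((ω.symm e : Fin N) : ℕ) < M)).card : ℝ) / (Nat.factorial N : ℝ)
      ≤ ((M.descFactorial k * Nat.factorial (N - k) : ℕ) : ℝ) / (Nat.factorial N : ℝ) := by
        have hc3 : ((Finset.univ.filter (fun ω : EOrd n =>
            ∀ e ∈ T, ((ω.symm e : Fin N) : ℕ) < M)).card : ℝ)
            ≤ ((M.descFactorial k * Nat.factorial (N - k) : ℕ) : ℝ) := by exact_mod_cast hc2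
        exact div_le_div_of_nonneg_right (c := (Nat.factorial N : ℝ)) hc3 hNfpos.le
    _ = (M.descFactorial k : ℝ) / (N.descFactorial k : ℝ) := by
        have hf0 : ((Nat.factorial (N - k) : ℕ) : ℝ) ≠ 0 := by positivity
        have hdf0 : ((N.descFactorial k : ℕ) : ℝ) ≠ 0 := ne_of_gt hdfpos
        have h7 : ((Nat.factorial N : ℕ) : ℝ)
            = ((Nat.factorial (N - k) : ℕ) : ℝ) * ((N.descFactorial k : ℕ) : ℝ) := by
          exact_mod_cast (Nat.factorial_mul_descFactorial hkN).symm
        rw [h7]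
        push_cast
        field_simp
    _ ≤ ((M : ℝ) / (N : ℝ)) ^ k := by
        rw [div_pow, div_le_div_iff₀ hdfpos (pow_pos hNpos k)]
        exact_mod_cast nat_df_ratio hMN k

lemma pow_le_exp_mul_factorial (k : ℕ) :
    ((k : ℝ)) ^ k ≤ Real.exp 1 ^ k * (Nat.factorial k : ℝ) := by
  have h := Real.pow_div_factorial_le_exp (x := (k : ℝ)) (Nat.cast_nonneg k) k
  rw [div_le_iff₀ (by exact_mod_cast Nat.factorial_pos k)] at h
  calc ((k : ℝ)) ^ k ≤ Real.exp k * (Nat.factorial k : ℝ) := h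
    _ = Real.exp 1 ^ k * (Nat.factorial k : ℝ) := by
        rw [← Real.exp_nat_mul, mul_one]

lemma cast_choose_le (a k : ℕ) (hk : 1 ≤ k) :
    ((a.choose k : ℕ) : ℝ) ≤ (Real.exp 1 * a / k) ^ k := by
  have h1 : ((a.choose k : ℕ) : ℝ) * (Nat.factorial k : ℝ) ≤ (a : ℝ) ^ k := by
    have : a.choose k * Nat.factorial k ≤ a ^ k := by
      rw [mul_comm, ← Nat.descFactorial_eq_factorial_mul_choose]
      exact Nat.descFactorial_le_pow a k
    exact_mod_cast this
  have h2 := pow_le_exp_mul_factorial k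
  have hkpos : (0 : ℝ) < (k : ℝ) := by exact_mod_cast hk
  have hfpos : (0 : ℝ) < (Nat.factorial k : ℝ) := by exact_mod_cast Nat.factorial_pos k
  rw [div_pow, le_div_iff₀ (pow_pos hkpos k)]
  have hcnn : (0 : ℝ) ≤ ((a.choose k : ℕ) : ℝ) := by positivity
  calc ((a.choose k : ℕ) : ℝ) * (k : ℝ) ^ k
      ≤ ((a.choose k : ℕ) : ℝ) * (Real.exp 1 ^ k * (Nat.factorial k : ℝ)) := by
        exact mul_le_mul_of_nonneg_left h2 hcnn
    _ = (((a.choose k : ℕ) : ℝ) * (Nat.factorial k : ℝ)) * Real.exp 1 ^ k := by ring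
    _ ≤ (a : ℝ) ^ k * Real.exp 1 ^ k := by
        exact mul_le_mul_of_nonneg_right h1 (by positivity)
    _ = (Real.exp 1 * a) ^ k := by rw [mul_pow]; ring

lemma prob_S {n : ℕ} (M : ℕ) (hMN : M ≤ n.choose 2) (hN : 0 < n.choose 2)
    (S : Finset (Fin n)) (hkN : 2 * S.card + 1 ≤ n.choose 2) :
    prob (fun ω : EOrd n => 2 * S.card + 1 ≤ eIn ω M S)
      ≤ (Real.exp 1 * S.card / 2 * ((M : ℝ) / (n.choose 2))) ^ (2 * S.card + 1) := by
  classical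
  set N := n.choose 2 with hNdef
  set k := 2 * S.card + 1 with hkdef
  set F : Finset (EdgeKn n) := Finset.univ.filter (fun e => ∀ v ∈ e.1, v ∈ S) with hF
  have himp : ∀ ω : EOrd n, (k ≤ eIn ω M S) →
      ∃ T ∈ F.powersetCard k, ∀ e ∈ T, ((ω.symm e : Fin N) : ℕ) < M := by
    intro ω hω
    rw [eIn_eq_card] at hω
    obtain ⟨T, hTsub, hTcard⟩ := Finset.exists_subset_card_eq hω
    refine ⟨T, Finset.mem_powersetCard.mpr ⟨?_, hTcard⟩, ?_⟩
    · intro e he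
      have h8 := hTsub he
      simp only [Finset.mem_filter, Finset.mem_univ, true_and] at h8
      rw [hF]
      exact Finset.mem_filter.mpr ⟨Finset.mem_univ _, h8.1⟩
    · intro e he
      have h8 := hTsub he
      simp only [Finset.mem_filter, Finset.mem_univ, true_and] at h8
      exact h8.2
  have hub := prob_exists_le (Ω := EOrd n) (F.powersetCard k)
      (fun T ω => ∀ e ∈ T, ((ω.symm e : Fin N) : ℕ) < M)
  have h1 : prob (fun ω : EOrd n => k ≤ eIn ω M S) ≤
      ∑ T ∈ F.powersetCard k,
        prob (fun ω : EOrd n => ∀ e ∈ T, ((ω.symm e : Fin N) : ℕ) < M) :=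
    (prob_mono himp).trans hub
  have h2 : ∀ T ∈ F.powersetCard k,
      prob (fun ω : EOrd n => ∀ e ∈ T, ((ω.symm e : Fin N) : ℕ) < M) ≤ ((M : ℝ) / N) ^ k := by
    intro T hT
    have hTcard : T.card = k := (Finset.mem_powersetCard.mp hT).2
    have h9 := prob_T M hMN hN T (by rw [hTcard]; exact hkN)
    rwa [hTcard] at h9
  have h3 : prob (fun ω : EOrd n => k ≤ eIn ω M S)
      ≤ (F.card.choose k : ℝ) * ((M : ℝ) / N) ^ k := by
    refine h1.trans ?_
    calc ∑ T ∈ F.powersetCard k,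
          prob (fun ω : EOrd n => ∀ e ∈ T, ((ω.symm e : Fin N) : ℕ) < M)
        ≤ (F.powersetCard k).card • (((M : ℝ) / N) ^ k) :=
          Finset.sum_le_card_nsmul _ _ _ h2
      _ = (F.card.choose k : ℝ) * ((M : ℝ) / N) ^ k := by
          rw [Finset.card_powersetCard, nsmul_eq_mul]
  have hFcard : F.card ≤ S.card ^ 2 := by
    have hsub : F.image (fun e => e.1) ⊆ S.sym2 := by
      intro x hx
      obtain ⟨e, he, rfl⟩ := Finset.mem_image.mp hx
      rw [hF] at he
      simp only [Finset.mem_filter] at he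
      exact Finset.mem_sym2_iff.mpr he.2
    calc F.card = (F.image (fun e => e.1)).card :=
          (Finset.card_image_of_injective _ Subtype.val_injective).symm
      _ ≤ S.sym2.card := Finset.card_le_card hsub
      _ ≤ (S ×ˢ S).card := by
          rw [Finset.sym2_eq_image]
          exact Finset.card_image_le
      _ = S.card ^ 2 := by rw [Finset.card_product, sq]
  have hchoose : (F.card.choose k : ℝ) ≤ (Real.exp 1 * S.card / 2) ^ k := by
    calc (F.card.choose k : ℝ) ≤ ((S.card ^ 2).choose k : ℝ) := by
          exact_mod_cast Nat.choose_le_choose k hFcard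
      _ ≤ (Real.exp 1 * ((S.card ^ 2 : ℕ) : ℝ) / k) ^ k := by
          exact_mod_cast cast_choose_le (S.card ^ 2) k (by omega)
      _ ≤ (Real.exp 1 * S.card / 2) ^ k := by
          apply pow_le_pow_left₀ (by positivity)
          rw [div_le_div_iff₀ (by exact_mod_cast Nat.succ_pos _) (by norm_num)]
          rw [hkdef]
          push_cast
          nlinarith [Real.exp_pos 1, Nat.cast_nonneg (α := ℝ) S.card,
            mul_nonneg (Real.exp_pos 1).le (Nat.cast_nonneg (α := ℝ) S.card)]
  have hρ : (0 : ℝ) ≤ (M : ℝ) / N := by positivity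
  calc prob (fun ω : EOrd n => 2 * S.card + 1 ≤ eIn ω M S)
      ≤ (F.card.choose k : ℝ) * ((M : ℝ) / N) ^ k := h3
    _ ≤ (Real.exp 1 * S.card / 2) ^ k * ((M : ℝ) / N) ^ k :=
        mul_le_mul_of_nonneg_right hchoose (pow_nonneg hρ k)
    _ = (Real.exp 1 * S.card / 2 * ((M : ℝ) / N)) ^ k := (mul_pow _ _ _).symm

lemma eIn_mono {n : ℕ} (ω : EOrd n) {m M : ℕ} (h : m ≤ M) (S : Finset (Fin n)) :
    eIn ω m S ≤ eIn ω M S := by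
  apply Set.ncard_le_ncard ?_ (Set.toFinite _)
  intro i hi
  exact ⟨lt_of_lt_of_le hi.1 h, hi.2⟩

lemma geom_half_le_two (m : ℕ) : ∑ s ∈ Finset.range m, ((1:ℝ)/2) ^ s ≤ 2 := by
  rw [geom_sum_eq (by norm_num : (1:ℝ)/2 ≠ 1)]
  have h0 : (0:ℝ) ≤ ((1:ℝ)/2) ^ m := by positivity
  rw [div_le_iff_of_neg (by norm_num : ((1:ℝ)/2 - 1) < 0)]
  linarith

lemma final_bound {n : ℕ} (hn : 16 ≤ n)
    (hL8 : 8 * Real.exp 1 ^ 3 ≤ Real.log n) (hL1 : 1 ≤ Real.log n)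
    (hlogn4 : Real.log n ≤ (n : ℝ) / 4) :
    1 - 4 * Real.exp 1 / (Real.log n) ^ 2 ≤
      prob (fun ω : EOrd n =>
        ∀ m : ℕ, mInRange n m →
          ∀ S : Finset (Fin n),
            (S.card : ℝ) ≤ (n : ℝ) / (Real.log n) ^ 3 →
              (eIn ω m S : ℝ) ≤ 2 * S.card) := by
  classical
  set L := Real.log n with hLdef
  have hLpos : (0:ℝ) < L := lt_of_lt_of_le one_pos hL1
  have hnR : (16:ℝ) ≤ (n:ℝ) := by exact_mod_cast hn
  have hnpos : (0:ℝ) < (n:ℝ) := by linarith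
  set N := n.choose 2 with hNdef
  set M := ⌊(n : ℝ) / 2 * (Real.log n + Real.log (Real.log n))⌋₊ with hMdef
  have hNr : (N:ℝ) = (n:ℝ) * ((n:ℝ) - 1) / 2 := Nat.cast_choose_two ℝ n
  have hN4 : (n:ℝ)^2/4 ≤ (N:ℝ) := by rw [hNr]; nlinarith
  have hNposR : (0:ℝ) < (N:ℝ) := by nlinarith
  have hNpos : 0 < N := by exact_mod_cast hNposR
  have hlogL : Real.log L ≤ L := le_trans (Real.log_le_sub_one_of_pos hLpos) (by linarith)
  have hlogLnn : 0 ≤ Real.log L := Real.log_nonneg hL1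
  have hMreal : (M:ℝ) ≤ (n:ℝ) * L := by
    have h1 : (M:ℝ) ≤ (n : ℝ) / 2 * (L + Real.log L) := Nat.floor_le (by positivity)
    calc (M:ℝ) ≤ (n : ℝ) / 2 * (L + Real.log L) := h1
      _ ≤ (n : ℝ) / 2 * (L + L) := by
          apply mul_le_mul_of_nonneg_left (by linarith) (by positivity)
      _ = (n:ℝ) * L := by ring
  have hMN : M ≤ N := by
    have : (M:ℝ) ≤ (N:ℝ) := by
      calc (M:ℝ) ≤ (n:ℝ) * L := hMreal
        _ ≤ (n:ℝ) * ((n:ℝ)/4) := by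
            apply mul_le_mul_of_nonneg_left hlogn4 (by positivity)
        _ = (n:ℝ)^2/4 := by ring
        _ ≤ (N:ℝ) := hN4
    exact_mod_cast this
  have hρ0 : (0:ℝ) ≤ (M:ℝ)/(N:ℝ) := by positivity
  have hρ : (M:ℝ)/(N:ℝ) ≤ 4*L/(n:ℝ) := by
    have h2 : (M:ℝ)/(N:ℝ) ≤ ((n:ℝ)*L)/((n:ℝ)^2/4) :=
      div_le_div₀ (by positivity) hMreal (by positivity) hN4
    calc (M:ℝ)/(N:ℝ) ≤ ((n:ℝ)*L)/((n:ℝ)^2/4) := h2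
      _ = 4*L/(n:ℝ) := by field_simp
  have h2n1N : ∀ S : Finset (Fin n), 2 * S.card + 1 ≤ N := by
    intro S
    have hcard : S.card ≤ n := le_trans (Finset.card_le_univ S) (by simp)
    have : ((2 * n + 1 : ℕ):ℝ) ≤ (N:ℝ) := by
      push_cast
      nlinarith
    have h3 : 2 * n + 1 ≤ N := by exact_mod_cast this
    omega
  have hcardΩ : Fintype.card (EOrd n) ≠ 0 := by
    rw [card_EOrd]
    exact Nat.factorial_ne_zero _
  rw [prob_compl hcardΩ]
  have hcompl : ∀ ω : EOrd n,
      (¬ ∀ m : ℕ, mInRange n m → ∀ S : Finset (Fin n),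
        (S.card : ℝ) ≤ (n : ℝ) / L ^ 3 → (eIn ω m S : ℝ) ≤ 2 * S.card) →
      (∃ S ∈ Finset.univ.filter (fun S : Finset (Fin n) =>
          (S.card : ℝ) ≤ (n : ℝ) / L ^ 3),
        2 * S.card + 1 ≤ eIn ω M S) := by
    intro ω hω
    push_neg at hω
    obtain ⟨m, hm, S, hScard, hSgt⟩ := hω
    refine ⟨S, Finset.mem_filter.mpr ⟨Finset.mem_univ _, hScard⟩, ?_⟩
    have hmM : m ≤ M := Nat.le_floor hm.2
    have h4 : 2 * S.card + 1 ≤ eIn ω m S := by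
      have : (2 * S.card : ℕ) < eIn ω m S := by exact_mod_cast hSgt
      omega
    exact h4.trans (eIn_mono ω hmM S)
  have hbad : prob (fun ω : EOrd n =>
      ¬ ∀ m : ℕ, mInRange n m → ∀ S : Finset (Fin n),
        (S.card : ℝ) ≤ (n : ℝ) / L ^ 3 → (eIn ω m S : ℝ) ≤ 2 * S.card)
      ≤ 4 * Real.exp 1 / L ^ 2 := by
    set t₁ : Finset (Finset (Fin n)) := Finset.univ.filter
      (fun S : Finset (Fin n) => (S.card : ℝ) ≤ (n : ℝ) / L ^ 3) with ht₁
    have step1 : prob (fun ω : EOrd n =>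
        ¬ ∀ m : ℕ, mInRange n m → ∀ S : Finset (Fin n),
          (S.card : ℝ) ≤ (n : ℝ) / L ^ 3 → (eIn ω m S : ℝ) ≤ 2 * S.card)
        ≤ ∑ S ∈ t₁, prob (fun ω : EOrd n => 2 * S.card + 1 ≤ eIn ω M S) :=
      (prob_mono hcompl).trans (prob_exists_le t₁ _)
    have step2 : ∀ S ∈ t₁, prob (fun ω : EOrd n => 2 * S.card + 1 ≤ eIn ω M S)
        ≤ (Real.exp 1 * S.card / 2 * ((M : ℝ) / (N:ℝ))) ^ (2 * S.card + 1) := by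
      intro S _
      exact prob_S M hMN hNpos S (h2n1N S)
    set ρ : ℝ := (M : ℝ) / (N:ℝ) with hρdef
    set g : ℕ → ℝ := fun s => (Real.exp 1 * s / 2 * ρ) ^ (2 * s + 1) with hg
    set s₀ := ⌊(n:ℝ)/L^3⌋₊ with hs₀
    have hsubset : t₁ ⊆ (Finset.range (s₀+1)).biUnion
        (fun s => Finset.powersetCard s Finset.univ) := by
      intro S hS
      rw [ht₁] at hS
      simp only [Finset.mem_filter] at hS
      rw [Finset.mem_biUnion]
      refine ⟨S.card, Finset.mem_range.mpr (Nat.lt_succ_of_le (Nat.le_floor hS.2)), ?_⟩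
      exact Finset.mem_powersetCard.mpr ⟨Finset.subset_univ _, rfl⟩
    have hdisj : Set.PairwiseDisjoint ↑(Finset.range (s₀+1))
        (fun s => Finset.powersetCard s (Finset.univ : Finset (Fin n))) := by
      intro a _ b _ hab
      apply Finset.disjoint_left.mpr
      intro S hSa hSb
      exact hab ((Finset.mem_powersetCard.mp hSa).2.symm.trans
        (Finset.mem_powersetCard.mp hSb).2)
    have step3 : ∑ S ∈ t₁, g S.card
        ≤ ∑ s ∈ Finset.range (s₀+1), ∑ S ∈ Finset.powersetCard s (Finset.univ : Finset (Fin n)),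
            g S.card := by
      refine le_trans (Finset.sum_le_sum_of_subset_of_nonneg hsubset
        (fun S _ _ => by simp only [hg]; positivity)) ?_
      rw [Finset.sum_biUnion hdisj]
    have step4 : ∀ s ∈ Finset.range (s₀+1),
        ∑ S ∈ Finset.powersetCard s (Finset.univ : Finset (Fin n)), g S.card
          = (n.choose s : ℝ) * g s := by
      intro s _
      rw [Finset.sum_congr rfl (fun S hS => by
        rw [(Finset.mem_powersetCard.mp hS).2])]
      rw [Finset.sum_const, Finset.card_powersetCard, Finset.card_univ, Fintype.card_fin,
        nsmul_eq_mul]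
    have step5 : ∀ s ∈ Finset.range (s₀+1),
        (n.choose s : ℝ) * g s ≤ (1/2:ℝ)^s * (2 * Real.exp 1 / L^2) := by
      intro s hs
      rcases Nat.eq_zero_or_pos s with rfl | hs1
      · simp only [hg]
        simp only [Nat.choose_zero_right, Nat.cast_one, Nat.cast_zero]
        norm_num
        positivity
      · have hsposR : (0:ℝ) < (s:ℝ) := by exact_mod_cast hs1
        have hs₀le : (s:ℝ) ≤ (n:ℝ)/L^3 := by
          have h5 : s ≤ s₀ := Nat.lt_succ_iff.mp (Finset.mem_range.mp hs)
          calc (s:ℝ) ≤ (s₀:ℝ) := by exact_mod_cast h5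
            _ ≤ (n:ℝ)/L^3 := Nat.floor_le (by positivity)
        have hsL3 : (s:ℝ) * L^3 ≤ (n:ℝ) := by
          rw [← le_div_iff₀ (by positivity : (0:ℝ) < L^3)]
          exact hs₀le
        set e := Real.exp 1 with he
        have hepos : (0:ℝ) < e := Real.exp_pos 1
        have ha0 : (0:ℝ) ≤ e * (s:ℝ) / 2 * ρ := by positivity
        have haa : e * (s:ℝ) / 2 * ρ ≤ 2*e*(s:ℝ)*L/(n:ℝ) := by
          calc e * (s:ℝ) / 2 * ρ ≤ e * (s:ℝ) / 2 * (4*L/(n:ℝ)) :=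
              mul_le_mul_of_nonneg_left hρ (by positivity)
            _ = 2*e*(s:ℝ)*L/(n:ℝ) := by ring
        have hchoose := cast_choose_le n s hs1
        have hi1 : (s:ℝ)*L^2/(n:ℝ) ≤ 1/L := by
          rw [div_le_div_iff₀ hnpos hLpos]
          nlinarith
        have hi2 : (s:ℝ)*L/(n:ℝ) ≤ 1/L^2 := by
          rw [div_le_div_iff₀ hnpos (by positivity : (0:ℝ) < L^2)]
          nlinarith
        simp only [hg]
        calc (n.choose s : ℝ) * (e * (s:ℝ) / 2 * ρ) ^ (2*s+1)
            ≤ (e*(n:ℝ)/(s:ℝ))^s * (2*e*(s:ℝ)*L/(n:ℝ))^(2*s+1) := by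
              apply mul_le_mul hchoose (pow_le_pow_left₀ ha0 haa _) (by positivity) (by positivity)
          _ = ((e*(n:ℝ)/(s:ℝ)) * (2*e*(s:ℝ)*L/(n:ℝ))^2)^s * (2*e*(s:ℝ)*L/(n:ℝ)) := by
              rw [pow_succ, pow_mul, ← mul_assoc, ← mul_pow]
          _ ≤ (1/2:ℝ)^s * (2 * e / L^2) := by
              apply mul_le_mul ?_ ?_ (by positivity) (by positivity)
              · apply pow_le_pow_left₀ (by positivity)
                have heq : (e*(n:ℝ)/(s:ℝ)) * (2*e*(s:ℝ)*L/(n:ℝ))^2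
                    = 4*e^3*((s:ℝ)*L^2/(n:ℝ)) := by
                  field_simp
                  ring
                rw [heq]
                calc 4*e^3*((s:ℝ)*L^2/(n:ℝ)) ≤ 4*e^3*(1/L) :=
                    mul_le_mul_of_nonneg_left hi1 (by positivity)
                  _ = 4*e^3/L := by ring
                  _ ≤ 1/2 := by
                    rw [div_le_iff₀ hLpos]
                    nlinarith
              · calc 2*e*(s:ℝ)*L/(n:ℝ) = 2*e*((s:ℝ)*L/(n:ℝ)) := by ring
                  _ ≤ 2*e*(1/L^2) := mul_le_mul_of_nonneg_left hi2 (by positivity)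
                  _ = 2*e/L^2 := by ring
    calc prob (fun ω : EOrd n =>
        ¬ ∀ m : ℕ, mInRange n m → ∀ S : Finset (Fin n),
          (S.card : ℝ) ≤ (n : ℝ) / L ^ 3 → (eIn ω m S : ℝ) ≤ 2 * S.card)
        ≤ ∑ S ∈ t₁, prob (fun ω : EOrd n => 2 * S.card + 1 ≤ eIn ω M S) := step1
      _ ≤ ∑ S ∈ t₁, g S.card := Finset.sum_le_sum (fun S hS => by
          simp only [hg]; exact step2 S hS)
      _ ≤ ∑ s ∈ Finset.range (s₀+1), ∑ S ∈ Finset.powersetCard s (Finset.univ : Finset (Fin n)),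
            g S.card := step3
      _ = ∑ s ∈ Finset.range (s₀+1), (n.choose s : ℝ) * g s :=
          Finset.sum_congr rfl step4
      _ ≤ ∑ s ∈ Finset.range (s₀+1), (1/2:ℝ)^s * (2 * Real.exp 1 / L^2) :=
          Finset.sum_le_sum step5
      _ = (∑ s ∈ Finset.range (s₀+1), (1/2:ℝ)^s) * (2 * Real.exp 1 / L^2) := by
          rw [Finset.sum_mul]
      _ ≤ 2 * (2 * Real.exp 1 / L^2) := by
          apply mul_le_mul_of_nonneg_right (geom_half_le_two _) (by positivity)
      _ = 4 * Real.exp 1 / L ^ 2 := by ring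
  linarith [hbad]

end Aux

/-- **Lemma 3(b).** W.h.p., simultaneously for all `m` in the connectivity window and
all `S ⊆ [n]` with `|S| ≤ n/(log n)³`, the number of edges of `G_m` inside `S` is at
most `2|S|`. -/
theorem edge_density_small_sets :
    Filter.Tendsto
      (fun n : ℕ =>
        prob (Ω := EOrd n) (fun ω =>
          ∀ m : ℕ, mInRange n m →
            ∀ S : Finset (Fin n),
              (S.card : ℝ) ≤ (n : ℝ) / (Real.log n) ^ 3 →
                (eIn ω m S : ℝ) ≤ 2 * S.card))
      Filter.atTop (nhds 1) := by
  have hlog : Filter.Tendsto (fun n : ℕ => Real.log n) Filter.atTop Filter.atTop :=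
    Real.tendsto_log_atTop.comp tendsto_natCast_atTop_atTop
  have hlog2 : Filter.Tendsto (fun n : ℕ => (Real.log n) ^ 2) Filter.atTop Filter.atTop :=
    (Filter.tendsto_pow_atTop two_ne_zero).comp hlog
  have hlow : Filter.Tendsto (fun n : ℕ => 1 - 4 * Real.exp 1 / (Real.log n) ^ 2)
      Filter.atTop (nhds 1) := by
    have h0 : Filter.Tendsto (fun n : ℕ => 4 * Real.exp 1 / (Real.log n) ^ 2)
        Filter.atTop (nhds 0) :=
      Filter.Tendsto.div_atTop tendsto_const_nhds hlog2
    simpa using (tendsto_const_nhds (x := (1:ℝ))).sub h0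
  have h16 : ∀ᶠ n : ℕ in Filter.atTop, 16 ≤ n := Filter.eventually_ge_atTop 16
  have hL8 : ∀ᶠ n : ℕ in Filter.atTop, 8 * Real.exp 1 ^ 3 ≤ Real.log n :=
    hlog.eventually_ge_atTop _
  have hL1 : ∀ᶠ n : ℕ in Filter.atTop, 1 ≤ Real.log n := hlog.eventually_ge_atTop 1
  have hlog4 : ∀ᶠ n : ℕ in Filter.atTop, Real.log n ≤ (n : ℝ) / 4 := by
    have hb := Real.isLittleO_log_id_atTop.bound (by norm_num : (0:ℝ) < 1/4)
    have hev := (tendsto_natCast_atTop_atTop (R := ℝ)).eventually hb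
    filter_upwards [hev] with n h1
    have hn0 : (0:ℝ) ≤ (n:ℝ) := Nat.cast_nonneg n
    calc Real.log n ≤ |Real.log n| := le_abs_self _
      _ ≤ 1/4 * |(n:ℝ)| := by simpa [Real.norm_eq_abs] using h1
      _ = (n:ℝ)/4 := by rw [abs_of_nonneg hn0]; ring
  apply tendsto_of_tendsto_of_tendsto_of_le_of_le' hlow tendsto_const_nhds ?_ ?_
  · filter_upwards [h16, hL8, hL1, hlog4] with n h1 h2 h3 h4
    exact final_bound h1 h2 h3 h4
  · exact Filter.Eventually.of_forall (fun n => prob_le_one _)
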